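/- The number of Hermite histories of length 2n (Dyck paths of length 2n with each down step labeled by an integer between 1 and the height of that step) is (2n−1)!! = 1·3·5···(2n−1). -/

import Mathlib

open Finset

/-- Steps of a Motzkin path: up, level, down. -/
inductive Step | U | L | D
deriving DecidableEq

instance : Fintype Step :=
  ⟨{Step.U, Step.L, Step.D}, fun x => by cases x <;> simp⟩

/-- `μ` is a Motzkin path: every prefix has at least as many `U`'s as `D`'s, and the
total numbers of `U`'s and `D`'s agree. -/
def IsMotzkin {n : ℕ} (μ : Fin n → Step) : Prop :=
  (∀ k : Fin n, (Finset.univ.filter (fun j => j ≤ k ∧ μ j = Step.D)).card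
      ≤ (Finset.univ.filter (fun j => j ≤ k ∧ μ j = Step.U)).card)
  ∧ (Finset.univ.filter (fun j => μ j = Step.U)).card
    = (Finset.univ.filter (fun j => μ j = Step.D)).card

/-- The height of the `i`-th step of `μ`: the larger of the two `y`-coordinates of
the step, i.e. `#{j ≤ i : μ j = U} − #{j < i : μ j = D}`. -/
def height {n : ℕ} (μ : Fin n → Step) (i : Fin n) : ℕ :=
  (Finset.univ.filter (fun j => j ≤ i ∧ μ j = Step.U)).card
    - (Finset.univ.filter (fun j => j < i ∧ μ j = Step.D)).card

/-- Biane's word of an involution: `U` if `i < σ i`, `L` if `i = σ i`, `D` if `i > σ i`. -/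
def bpath {n : ℕ} (σ : Equiv.Perm (Fin n)) (i : Fin n) : Step :=
  if i < σ i then Step.U else if σ i = i then Step.L else Step.D

/-- Biane's label of step `i`: `|{j ≥ i : σ j ≤ σ i}|`. -/
def blabel {n : ℕ} (σ : Equiv.Perm (Fin n)) (i : Fin n) : ℕ :=
  (Finset.univ.filter (fun j => i ≤ j ∧ σ j ≤ σ i)).card

open scoped Classical

/-- `μ` is a Dyck path: a Motzkin path with no level steps. -/
def IsDyck {n : ℕ} (μ : Fin n → Step) : Prop :=
  IsMotzkin μ ∧ ∀ i, μ i ≠ Step.L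

lemma card_cons_le {m : ℕ} (s : Step) (μ : Fin m → Step) (X : Step) (k : Fin m) :
    (univ.filter (fun j : Fin (m+1) => j ≤ k.succ ∧ (Fin.cons s μ : Fin (m+1) → Step) j = X)).card
    = (if s = X then 1 else 0) + (univ.filter (fun j : Fin m => j ≤ k ∧ μ j = X)).card := by
  rw [Finset.card_filter, Finset.card_filter, Fin.sum_univ_succ]
  simp [Fin.succ_le_succ_iff, Fin.cons]

lemma card_cons_lt {m : ℕ} (s : Step) (μ : Fin m → Step) (X : Step) (k : Fin m) :
    (univ.filter (fun j : Fin (m+1) => j < k.succ ∧ (Fin.cons s μ : Fin (m+1) → Step) j = X)).card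
    = (if s = X then 1 else 0) + (univ.filter (fun j : Fin m => j < k ∧ μ j = X)).card := by
  rw [Finset.card_filter, Finset.card_filter, Fin.sum_univ_succ]
  simp [Fin.succ_lt_succ_iff, Fin.cons, Fin.succ_pos]

lemma card_cons_le_zero {m : ℕ} (s : Step) (μ : Fin m → Step) (X : Step) :
    (univ.filter (fun j : Fin (m+1) => j ≤ 0 ∧ (Fin.cons s μ : Fin (m+1) → Step) j = X)).card
    = (if s = X then 1 else 0) := by
  rw [Finset.card_filter, Fin.sum_univ_succ]
  simp [Fin.le_zero_iff, Fin.succ_ne_zero]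

lemma card_cons_lt_zero {m : ℕ} (s : Step) (μ : Fin m → Step) (X : Step) :
    (univ.filter (fun j : Fin (m+1) => j < 0 ∧ (Fin.cons s μ : Fin (m+1) → Step) j = X)).card = 0 := by
  simp

lemma card_cons_tot {m : ℕ} (s : Step) (μ : Fin m → Step) (X : Step) :
    (univ.filter (fun j : Fin (m+1) => (Fin.cons s μ : Fin (m+1) → Step) j = X)).card
    = (if s = X then 1 else 0) + (univ.filter (fun j : Fin m => μ j = X)).card := by
  rw [Finset.card_filter, Finset.card_filter, Fin.sum_univ_succ]
  simp [Fin.cons]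
  rw [Finset.card_filter]
  convert rfl <;> split_ifs <;> simp_all
def HP (N m h : ℕ) (μ : Fin m → Step) (l : Fin m → Fin N) : Prop :=
  (∀ k : Fin m, (univ.filter (fun j => j ≤ k ∧ μ j = Step.D)).card
      ≤ (univ.filter (fun j => j ≤ k ∧ μ j = Step.U)).card + h)
  ∧ (univ.filter (fun j => μ j = Step.U)).card + h
      = (univ.filter (fun j => μ j = Step.D)).card
  ∧ (∀ i, μ i ≠ Step.L)
  ∧ (∀ i, μ i = Step.D → 1 ≤ (l i : ℕ) ∧ (l i : ℕ)
      ≤ (h + (univ.filter (fun j => j ≤ i ∧ μ j = Step.U)).card)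
        - (univ.filter (fun j => j < i ∧ μ j = Step.D)).card)
  ∧ (∀ i, μ i ≠ Step.D → (l i : ℕ) = 0)

noncomputable def HC (N m h : ℕ) : ℕ :=
  (univ.filter (fun p : (Fin m → Step) × (Fin m → Fin N) => HP N m h p.1 p.2)).card

lemma fiber_U (N m h : ℕ) (l : Fin N) (μ : Fin m → Step) (lam : Fin m → Fin N) :
    HP N (m+1) h (Fin.cons Step.U μ) (Fin.cons l lam) ↔ ((l:ℕ) = 0 ∧ HP N m (h+1) μ lam) := by
  unfold HP
  rw [Fin.forall_fin_succ, Fin.forall_fin_succ, Fin.forall_fin_succ, Fin.forall_fin_succ]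
  simp only [card_cons_le, card_cons_lt, card_cons_le_zero, card_cons_lt_zero, card_cons_tot,
    Fin.cons_zero, Fin.cons_succ]
  simp only [reduceCtorEq, if_true, if_false, ite_true, ite_false, reduceIte]
  constructor
  · rintro ⟨⟨-, hA⟩, hB, ⟨-, hC⟩, ⟨-, hD⟩, hl0, hE⟩
    exact ⟨hl0 (by simp), fun k => by have := hA k; omega, by omega, hC,
      fun i hi => by have := hD i hi; omega, hE⟩
  · rintro ⟨hl0, hA, hB, hC, hD, hE⟩
    exact ⟨⟨by omega, fun i => by have := hA i; omega⟩, by omega, ⟨by simp, hC⟩,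
      ⟨by simp, fun i hi => by have := hD i hi; omega⟩, fun _ => hl0, hE⟩

lemma fiber_L (N m h : ℕ) (l : Fin N) (μ : Fin m → Step) (lam : Fin m → Fin N) :
    HP N (m+1) h (Fin.cons Step.L μ) (Fin.cons l lam) ↔ False := by
  unfold HP
  simp only [iff_false]
  rintro ⟨-, -, hC, -⟩
  exact hC 0 (by simp)

lemma fiber_D (N m h : ℕ) (l : Fin N) (μ : Fin m → Step) (lam : Fin m → Fin N) :
    HP N (m+1) h (Fin.cons Step.D μ) (Fin.cons l lam)
      ↔ ((1 ≤ (l:ℕ) ∧ (l:ℕ) ≤ h) ∧ HP N m (h-1) μ lam) := by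
  unfold HP
  rw [Fin.forall_fin_succ, Fin.forall_fin_succ, Fin.forall_fin_succ, Fin.forall_fin_succ]
  simp only [card_cons_le, card_cons_lt, card_cons_le_zero, card_cons_lt_zero, card_cons_tot,
    Fin.cons_zero, Fin.cons_succ]
  simp only [reduceCtorEq, if_true, if_false, ite_true, ite_false, reduceIte]
  constructor
  · rintro ⟨⟨h0, hA⟩, hB, ⟨-, hC⟩, ⟨hD0, hD⟩, -, hE⟩
    have hl := hD0 trivial
    exact ⟨⟨hl.1, by omega⟩, fun k => by have := hA k; omega, by omega, hC,
      fun i hi => by have := hD i hi; omega, hE⟩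
  · rintro ⟨⟨hl1, hl2⟩, hA, hB, hC, hD, hE⟩
    have hh : 1 ≤ h := le_trans hl1 hl2
    exact ⟨⟨by omega, fun i => by have := hA i; omega⟩, by omega, ⟨by simp, hC⟩,
      ⟨fun _ => ⟨hl1, by omega⟩, fun i hi => by have := hD i hi; omega⟩,
      fun hc => absurd rfl hc, hE⟩

def cEquiv (α : Type _) (m : ℕ) : (α × (Fin m → α)) ≃ (Fin (m+1) → α) where
  toFun p := Fin.cons p.1 p.2
  invFun g := (g 0, fun i => g i.succ)
  left_inv p := by simp
  right_inv g := Fin.cons_self_tail g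

def bigEquiv (N m : ℕ) :
    ((Step × Fin N) × ((Fin m → Step) × (Fin m → Fin N)))
      ≃ ((Fin (m+1) → Step) × (Fin (m+1) → Fin N)) :=
  (Equiv.prodProdProdComm Step (Fin N) (Fin m → Step) (Fin m → Fin N)).trans
    ((cEquiv Step m).prodCongr (cEquiv (Fin N) m))

lemma HC_zero (N h : ℕ) : HC N 0 h = if h = 0 then 1 else 0 := by
  rw [HC]
  by_cases hh : h = 0
  · subst hh
    rw [Finset.filter_true_of_mem, Finset.card_univ]
    · simp
    · intro p _
      exact ⟨fun k => k.elim0, by simp, fun i => i.elim0, fun i => i.elim0, fun i => i.elim0⟩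
  · rw [Finset.filter_false_of_mem, Finset.card_empty]
    · simp [hh]
    · intro p _ hp
      have := hp.2.1
      simp at this
      exact hh this

lemma inner_U (N m h : ℕ) (l : Fin N) :
    (∑ t : (Fin m → Step) × (Fin m → Fin N),
      if HP N (m+1) h (Fin.cons Step.U t.1) (Fin.cons l t.2) then 1 else 0)
    = if (l : ℕ) = 0 then HC N m (h+1) else 0 := by
  simp only [fiber_U]
  by_cases hl : (l : ℕ) = 0
  · simp only [hl, if_pos, true_and, HC, Finset.card_filter]
  · simp [hl]

lemma inner_L (N m h : ℕ) (l : Fin N) :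
    (∑ t : (Fin m → Step) × (Fin m → Fin N),
      if HP N (m+1) h (Fin.cons Step.L t.1) (Fin.cons l t.2) then 1 else 0) = 0 := by
  simp [fiber_L]

lemma inner_D (N m h : ℕ) (l : Fin N) :
    (∑ t : (Fin m → Step) × (Fin m → Fin N),
      if HP N (m+1) h (Fin.cons Step.D t.1) (Fin.cons l t.2) then 1 else 0)
    = if (1 ≤ (l : ℕ) ∧ (l : ℕ) ≤ h) then HC N m (h-1) else 0 := by
  simp only [fiber_D]
  by_cases hl : (1 ≤ (l : ℕ) ∧ (l : ℕ) ≤ h)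
  · simp only [hl, if_pos, true_and, HC, Finset.card_filter]
  · simp [hl]

lemma sum_l_U (N C : ℕ) (hN : 0 < N) :
    (∑ l : Fin N, if (l : ℕ) = 0 then C else 0) = C := by
  rw [Fin.sum_univ_eq_sum_range (fun i => if i = 0 then C else 0) N,
    Finset.sum_ite_eq' (Finset.range N) 0 (fun _ => C)]
  simp [hN]

lemma sum_l_D (N h C : ℕ) (hh : h < N) :
    (∑ l : Fin N, if (1 ≤ (l : ℕ) ∧ (l : ℕ) ≤ h) then C else 0) = h * C := by
  rw [Fin.sum_univ_eq_sum_range (fun i => if (1 ≤ i ∧ i ≤ h) then C else 0) N,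
    ← Finset.sum_filter]
  rw [Finset.sum_const, smul_eq_mul]
  congr 1
  have : (Finset.range N).filter (fun i => 1 ≤ i ∧ i ≤ h) = Finset.Icc 1 h := by
    ext i
    simp only [Finset.mem_filter, Finset.mem_range, Finset.mem_Icc]
    omega
  rw [this, Nat.card_Icc]
  omega

lemma sum_step (f : Step → ℕ) : ∑ s : Step, f s = f Step.U + f Step.L + f Step.D := by
  rw [show (Finset.univ : Finset Step) = {Step.U, Step.L, Step.D} from by decide]
  rw [Finset.sum_insert (by decide), Finset.sum_insert (by decide), Finset.sum_singleton]
  omega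

lemma HC_succ (N m h : ℕ) (hh : h < N) :
    HC N (m+1) h = HC N m (h+1) + h * HC N m (h-1) := by
  have hN : 0 < N := lt_of_le_of_lt (Nat.zero_le h) hh
  rw [HC, Finset.card_filter,
    ← Equiv.sum_comp (bigEquiv N m)
      (fun p : (Fin (m+1) → Step) × (Fin (m+1) → Fin N) => if HP N (m+1) h p.1 p.2 then 1 else 0),
    Fintype.sum_prod_type, Fintype.sum_prod_type]
  have : ∀ s : Step, ∀ l : Fin N,
      (∑ t : (Fin m → Step) × (Fin m → Fin N),
        if HP N (m+1) h ((bigEquiv N m) ((s, l), t)).1 ((bigEquiv N m) ((s, l), t)).2 then 1 else 0)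
      = (∑ t : (Fin m → Step) × (Fin m → Fin N),
        if HP N (m+1) h (Fin.cons s t.1) (Fin.cons l t.2) then 1 else 0) := by
    intro s l
    rfl
  simp only [this]
  rw [sum_step (fun s => ∑ l : Fin N, ∑ t : (Fin m → Step) × (Fin m → Fin N),
    if HP N (m+1) h (Fin.cons s t.1) (Fin.cons l t.2) then 1 else 0)]
  simp only [inner_U, inner_L, inner_D]
  rw [sum_l_U N (HC N m (h+1)) hN, sum_l_D N h (HC N m (h-1)) hh]
  simp

def T : ℕ → ℕ → ℕ
  | 0, 0 => 1
  | 0, _+1 => 0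
  | m+1, h => T m (h+1) + h * T m (h-1)

def oddP (t : ℕ) : ℕ := ∏ i ∈ Finset.range t, (2*i+1)

lemma T_gt : ∀ m h, m < h → T m h = 0 := by
  intro m
  induction m with
  | zero => intro h hh; match h, hh with | k+1, _ => rfl
  | succ m ih =>
    intro h hh
    show T m (h+1) + h * T m (h-1) = 0
    rw [ih (h+1) (by omega), ih (h-1) (by omega), mul_zero]
    omega

lemma T_odd : ∀ m, ∀ t h, m = 2*t + 1 + h → T m h = 0 := by
  intro m
  induction m with
  | zero => intro t h hm; omega
  | succ m ih =>
    intro t h hm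
    show T m (h+1) + h * T m (h-1) = 0
    have h1 : T m (h+1) = 0 := by
      rcases Nat.eq_zero_or_pos t with ht | ht
      · exact T_gt m (h+1) (by omega)
      · exact ih (t-1) (h+1) (by omega)
    have h2 : h * T m (h-1) = 0 := by
      rcases Nat.eq_zero_or_pos h with h0 | h0
      · rw [h0, zero_mul]
      · rw [ih t (h-1) (by omega), mul_zero]
    rw [h1, h2]

lemma T_even : ∀ m, ∀ t h, m = 2*t + h → T m h = Nat.descFactorial m h * oddP t := by
  intro m
  induction m with
  | zero =>
    intro t h hm
    have ht : t = 0 := by omega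
    have hh : h = 0 := by omega
    subst ht; subst hh
    simp [T, oddP]
  | succ m ih =>
    intro t h hm
    show T m (h+1) + h * T m (h-1) = Nat.descFactorial (m+1) h * oddP t
    rcases Nat.eq_zero_or_pos t with ht | ht
    · -- m+1 = h
      subst ht
      have hmh : m + 1 = h := by omega
      have h1 : T m (h+1) = 0 := T_gt m (h+1) (by omega)
      have h2 : T m (h-1) = Nat.descFactorial m (h-1) * oddP 0 := ih 0 (h-1) (by omega)
      rw [h1, h2, zero_add, ← hmh]
      rw [Nat.succ_descFactorial_succ]
      simp only [Nat.add_sub_cancel]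
      ring
    · -- t ≥ 1
      obtain ⟨t', rfl⟩ : ∃ t', t = t' + 1 := ⟨t - 1, by omega⟩
      have h1 : T m (h+1) = Nat.descFactorial m (h+1) * oddP t' := ih t' (h+1) (by omega)
      rcases Nat.eq_zero_or_pos h with h0 | h0
      · subst h0
        rw [h1, mul_comm 0, mul_zero, add_zero]
        rw [Nat.descFactorial_succ, Nat.descFactorial_zero, Nat.descFactorial_zero]
        have : oddP (t'+1) = oddP t' * (2*t'+1) := by
          rw [oddP, oddP, Finset.prod_range_succ]
        rw [this]
        have hm' : m - 0 = 2*t' + 1 := by omega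
        rw [hm']
        ring
      · obtain ⟨h'', rfl⟩ : ∃ h'', h = h'' + 1 := ⟨h - 1, by omega⟩
        have h2 : T m h'' = Nat.descFactorial m h'' * oddP (t'+1) :=
          ih (t'+1) h'' (by omega)
        simp only [Nat.add_sub_cancel] at *
        rw [h1, h2]
        rw [Nat.succ_descFactorial_succ]
        rw [Nat.descFactorial_succ, Nat.descFactorial_succ]
        have e1 : m - (h''+1) = 2*t' + 1 := by omega
        have e2 : m - h'' = 2*t' + 2 := by omega
        rw [e1, e2]
        have : oddP (t'+1) = oddP t' * (2*t'+1) := by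
          rw [oddP, oddP, Finset.prod_range_succ]
        rw [this]
        have hm1 : m + 1 = 2*t' + h'' + 3 := by omega
        rw [hm1]
        ring

lemma HC_eq_T (N : ℕ) : ∀ m h, m + h < N → HC N m h = T m h := by
  intro m
  induction m with
  | zero =>
    intro h _
    rw [HC_zero]
    rcases h with _ | h' <;> simp [T]
  | succ m ih =>
    intro h hlt
    rw [HC_succ N m h (by omega), ih (h+1) (by omega), ih (h-1) (by omega)]
    rfl


/-- The number of Hermite histories of length `2n` — Dyck paths of length `2n` with
each down step labeled by an integer between `1` and the height of that step (and,
as a normalization, label `0` on up steps) — is `(2n−1)!! = 1·3·5⋯(2n−1)`. -/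
theorem card_hermite_histories (n : ℕ) :
    (Finset.univ.filter
      (fun p : (Fin (2 * n) → Step) × (Fin (2 * n) → Fin (2 * n + 1)) =>
        IsDyck p.1
        ∧ (∀ i, p.1 i = Step.D → 1 ≤ (p.2 i : ℕ) ∧ (p.2 i : ℕ) ≤ height p.1 i)
        ∧ (∀ i, p.1 i ≠ Step.D → (p.2 i : ℕ) = 0))).card
    = ∏ k ∈ Finset.range n, (2 * k + 1) := by
  have key : (Finset.univ.filter
      (fun p : (Fin (2 * n) → Step) × (Fin (2 * n) → Fin (2 * n + 1)) =>
        IsDyck p.1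
        ∧ (∀ i, p.1 i = Step.D → 1 ≤ (p.2 i : ℕ) ∧ (p.2 i : ℕ) ≤ height p.1 i)
        ∧ (∀ i, p.1 i ≠ Step.D → (p.2 i : ℕ) = 0)))
      = (Finset.univ.filter
        (fun p : (Fin (2 * n) → Step) × (Fin (2 * n) → Fin (2 * n + 1)) =>
          HP (2*n+1) (2*n) 0 p.1 p.2)) := by
    apply Finset.filter_congr
    intro p _
    unfold HP IsDyck IsMotzkin height
    simp only [add_zero, zero_add]
    tauto
  rw [key]
  have h1 : HC (2*n+1) (2*n) 0 = T (2*n) 0 := HC_eq_T (2*n+1) (2*n) 0 (by omega)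
  have h2 : T (2*n) 0 = Nat.descFactorial (2*n) 0 * oddP n := T_even (2*n) n 0 (by omega)
  rw [show (Finset.univ.filter
        (fun p : (Fin (2 * n) → Step) × (Fin (2 * n) → Fin (2 * n + 1)) =>
          HP (2*n+1) (2*n) 0 p.1 p.2)).card = HC (2*n+1) (2*n) 0 from rfl, h1, h2]
  simp [oddP]
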